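/- Let S be a commutative ring, f ∈ S[x] a monic polynomial of degree 2, and R = S[x]/(f). Then the fiber product ring S[x] ×_R S (pairs (g, s) with g mod f equal to the image of s) is a free S-module; a basis is given by 1 together with the elements xⁿ - cₙx for n ≥ 2, where xⁿ ≡ cₙx + dₙ mod (f) with cₙ, dₙ ∈ S. -/

import Mathlib

open Polynomial

variable {S : Type*} [CommRing S]

/-- The `S`-linear map `S[x] → S` sending `g` to the `x`-coefficient of `g mod f`
(division with remainder by the monic polynomial `f`). Its kernel is the fiber product
`S[x] ×_{S[x]/(f)} S`, i.e. the subring of polynomials whose reduction mod `f` has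
vanishing `x`-coefficient. -/
noncomputable def xCoeffMod (f : Polynomial S) : Polynomial S →ₗ[S] S where
  toFun g := (g %ₘ f).coeff 1
  map_add' p q := by simp [Polynomial.add_modByMonic]
  map_smul' c p := by simp [Polynomial.smul_modByMonic]

/-- The candidate basis family. -/
noncomputable def vfam (f : Polynomial S) : ℕ → Polynomial S :=
  fun j => if j = 0 then 1 else X ^ (j + 1) - C ((X ^ (j + 1) %ₘ f).coeff 1) * X

/-- Index embedding: `0 ↦ 0`, `k ↦ k + 1` for `k ≥ 1`. -/
def eidx : ℕ → ℕ := fun k => if k = 0 then 0 else k + 1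

lemma eidx_inj : Function.Injective eidx := by
  intro a b h
  unfold eidx at h
  split_ifs at h <;> omega

lemma vfam_coeff (f : Polynomial S) (j k : ℕ) :
    (vfam f j).coeff (eidx k) = if j = k then 1 else 0 := by
  unfold vfam eidx
  rcases eq_or_ne j 0 with hj | hj <;> rcases eq_or_ne k 0 with hk | hk
  · simp [hj, hk]
  · simp [hj, hk, coeff_one, Ne.symm hk]
  · simp [hj, hk, coeff_X_pow, coeff_C_mul, coeff_X, Nat.succ_ne_zero,
      (by omega : ¬(0 : ℕ) = j + 1)]
  · simp only [hj, hk, ite_false, coeff_sub, coeff_X_pow, coeff_C_mul, coeff_X]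
    rw [if_neg (by omega : ¬(1 : ℕ) = k + 1), mul_zero, sub_zero]
    rcases eq_or_ne j k with h | h
    · simp [h]
    · rw [if_neg (by omega), if_neg h]

lemma degCX_lt {f : Polynomial S} (hdf : f.degree = 2) (c : S) :
    (C c * X).degree < f.degree := by
  refine lt_of_le_of_lt (degree_mul_le _ _) ?_
  rw [hdf]
  refine lt_of_le_of_lt (add_le_add degree_C_le degree_X_le) ?_
  rw [zero_add]
  exact_mod_cast Nat.one_lt_two

/-- To-Finsupp as a linear map. -/
noncomputable def toFinsuppLM : Polynomial S →ₗ[S] (ℕ →₀ S) where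
  toFun g := g.toFinsupp.coeff
  map_add' p q := by rw [Polynomial.toFinsupp_add]; rfl
  map_smul' c p := by rw [Polynomial.toFinsupp_smul]; rfl

/-- The coordinate map. -/
noncomputable def reprAux : Polynomial S →ₗ[S] (ℕ →₀ S) :=
  (Finsupp.lcomapDomain eidx eidx_inj).comp toFinsuppLM

lemma reprAux_apply (g : Polynomial S) (k : ℕ) : reprAux g k = g.coeff (eidx k) :=
  Polynomial.toFinsupp_apply g (eidx k)

lemma vfam_mem (f : Polynomial S) (hf : f.Monic) (hdeg : f.natDegree = 2) (j : ℕ) :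
    vfam f j ∈ LinearMap.ker (xCoeffMod f) := by
  rw [LinearMap.mem_ker]
  show ((vfam f j) %ₘ f).coeff 1 = 0
  rcases subsingleton_or_nontrivial S with h | h
  · exact Subsingleton.elim _ _
  have hdf : f.degree = 2 := by
    rw [degree_eq_natDegree hf.ne_zero, hdeg]; rfl
  have hmod : ∀ p : Polynomial S, p.degree < f.degree → p %ₘ f = p := by
    intro p hp
    rw [modByMonic_eq_self_iff hf]; exact hp
  unfold vfam
  rcases eq_or_ne j 0 with hj | hj
  · rw [hj, if_pos rfl, hmod 1 (by rw [degree_one, hdf]; exact_mod_cast Nat.zero_lt_two)]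
    exact coeff_one.trans (by norm_num)
  · rw [if_neg hj, sub_modByMonic, hmod _ (degCX_lt hdf _)]
    simp [coeff_C_mul, coeff_X]

lemma total_coeff (f : Polynomial S) (l : ℕ →₀ S) (k : ℕ) :
    (Finsupp.linearCombination S (vfam f) l).coeff (eidx k) = l k := by
  rw [Finsupp.linearCombination_apply, Finsupp.sum, Polynomial.finset_sum_coeff]
  simp only [Polynomial.coeff_smul, vfam_coeff, smul_eq_mul, mul_ite, mul_one, mul_zero]
  rw [Finset.sum_ite_eq' l.support k (fun j => l j)]
  split_ifs with h
  · rfl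
  · exact (Finsupp.notMem_support_iff.mp h).symm

theorem stmt10 (f : Polynomial S) (hf : f.Monic) (hdeg : f.natDegree = 2) :
    ∃ B : Module.Basis ℕ S (LinearMap.ker (xCoeffMod f)),
      ∀ j : ℕ, (B j : Polynomial S) =
        if j = 0 then 1
        else X ^ (j + 1) - C ((X ^ (j + 1) %ₘ f).coeff 1) * X := by
  have hmem : ∀ l : ℕ →₀ S,
      Finsupp.linearCombination S (vfam f) l ∈ LinearMap.ker (xCoeffMod f) := by
    intro l
    have : Finsupp.linearCombination S (vfam f) l ∈
        Submodule.span S (Set.range (vfam f)) := by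
      rw [← Finsupp.range_linearCombination]
      exact ⟨l, rfl⟩
    exact Submodule.span_le.mpr
      (Set.range_subset_iff.mpr (vfam_mem f hf hdeg)) this
  set K := LinearMap.ker (xCoeffMod f)
  let totalK : (ℕ →₀ S) →ₗ[S] K :=
    LinearMap.codRestrict K (Finsupp.linearCombination S (vfam f)) hmem
  let reprK : K →ₗ[S] (ℕ →₀ S) := reprAux.comp K.subtype
  have h2 : reprK.comp totalK = LinearMap.id := by
    apply Finsupp.lhom_ext
    intro j b
    ext k
    simp only [LinearMap.comp_apply, LinearMap.id_apply, reprK, totalK,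
      LinearMap.codRestrict_apply, Submodule.coe_subtype, reprAux_apply]
    rw [total_coeff]
  have h1 : totalK.comp reprK = LinearMap.id := by
    rcases subsingleton_or_nontrivial S with hS | hS
    · exact Subsingleton.elim _ _
    refine LinearMap.ext fun g => ?_
    simp only [LinearMap.comp_apply, LinearMap.id_apply]
    apply Subtype.ext
    simp only [totalK, reprK, LinearMap.codRestrict_apply, LinearMap.comp_apply,
      Submodule.coe_subtype]
    set t := Finsupp.linearCombination S (vfam f) (reprAux (g : Polynomial S)) with ht
    have hcoeff : ∀ k : ℕ, k ≠ 1 → t.coeff k = (g : Polynomial S).coeff k := by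
      intro k hk
      have hek : eidx (if k = 0 then 0 else k - 1) = k := by
        unfold eidx; split_ifs <;> omega
      rw [← hek, ht, total_coeff, reprAux_apply, hek]
    have hdf : f.degree = 2 := by
      rw [degree_eq_natDegree hf.ne_zero, hdeg]; rfl
    have hsub : ((g : Polynomial S) - t) = C (((g : Polynomial S) - t).coeff 1) * X := by
      ext k
      rcases eq_or_ne k 1 with hk | hk
      · simp [hk, coeff_C_mul, coeff_X]
      · rw [coeff_sub, hcoeff k hk, sub_self, coeff_C_mul, coeff_X,
          if_neg (Ne.symm hk), mul_zero]
    have hker : (g : Polynomial S) - t ∈ K := by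
      exact sub_mem g.2 (hmem _)
    have hmm : ((g : Polynomial S) - t) %ₘ f = (g : Polynomial S) - t := by
      rw [modByMonic_eq_self_iff hf]
      calc ((g : Polynomial S) - t).degree
          = (C (((g : Polynomial S) - t).coeff 1) * X).degree := by rw [← hsub]
        _ < f.degree := degCX_lt hdf _
    have hz : ((g : Polynomial S) - t).coeff 1 = 0 := by
      have hm := LinearMap.mem_ker.mp hker
      rwa [show xCoeffMod f ((g : Polynomial S) - t)
          = (((g : Polynomial S) - t) %ₘ f).coeff 1 from rfl, hmm] at hm
    have h0 : (g : Polynomial S) - t = 0 := by rw [hsub, hz, map_zero, zero_mul]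
    exact (sub_eq_zero.mp h0).symm
  refine ⟨Module.Basis.ofRepr (LinearEquiv.ofLinear reprK totalK h2 h1), fun j => ?_⟩
  rw [Module.Basis.coe_ofRepr]
  simp only [LinearEquiv.ofLinear_symm_apply]
  show ((totalK (Finsupp.single j 1) : K) : Polynomial S) = _
  simp only [totalK, LinearMap.codRestrict_apply, Finsupp.linearCombination_single, one_smul]
  rfl
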